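/- Let E, F be real Banach spaces and T₀ ∈ B(E,F) with range T₀ closed. Let N and F₊ be closed subspaces of F with N ≠ {0} such that F = range T₀ ⊕ N and F = F₊ ⊕ N. Let Q denote the continuous projection onto F₊ with kernel N. Then T₀ and Q ∘ T₀ are path connected in the set S = { T ∈ B(E,F) : range T is closed, F = range T ⊕ N, and ker T = ker T₀ }. -/

import Mathlib

/-- **Theorem 1.3.**
Let `E, F` be real Banach spaces and `T₀ ∈ B(E,F)` with closed range.  Let `N`
and `Fstar` be closed subspaces of `F` with `N ≠ {0}`, `F = range T₀ ⊕ N` and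
`F = Fstar ⊕ N`.  Let `Q` be the continuous projection onto `Fstar` with kernel
`N`.  Then `T₀` and `Q ∘ T₀` are path connected in the set
`S = { T ∈ B(E,F) : range T closed, F = range T ⊕ N, ker T = ker T₀ }`. -/
theorem joined_to_projected_range
    {E : Type*} [NormedAddCommGroup E] [NormedSpace ℝ E] [CompleteSpace E]
    {F : Type*} [NormedAddCommGroup F] [NormedSpace ℝ F] [CompleteSpace F]
    (T₀ : E →L[ℝ] F) (hT₀c : IsClosed (LinearMap.range (T₀ : E →ₗ[ℝ] F) : Set F))
    (N Fstar : Submodule ℝ F)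
    (hNc : IsClosed (N : Set F)) (hFsc : IsClosed (Fstar : Set F))
    (hN : N ≠ ⊥)
    (h₁ : IsCompl (LinearMap.range (T₀ : E →ₗ[ℝ] F)) N) (h₂ : IsCompl Fstar N)
    (Q : F →L[ℝ] F) (hQmem : ∀ y : F, Q y ∈ Fstar)
    (hQfix : ∀ y ∈ Fstar, Q y = y) (hQker : ∀ y ∈ N, Q y = 0) :
    JoinedIn {T : E →L[ℝ] F | IsClosed (LinearMap.range (T : E →ₗ[ℝ] F) : Set F) ∧
        IsCompl (LinearMap.range (T : E →ₗ[ℝ] F)) N ∧ LinearMap.ker (T : E →ₗ[ℝ] F) = LinearMap.ker (T₀ : E →ₗ[ℝ] F)}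
      T₀ (Q.comp T₀) := by
  set R := LinearMap.range (T₀ : E →ₗ[ℝ] F) with hR
  -- continuous projection onto R along N
  set π : F →L[ℝ] F :=
    R.subtypeL.comp (R.linearProjOfClosedCompl N h₁ hT₀c hNc) with hπ
  have hπ_left : ∀ y ∈ R, π y = y := by
    intro y hy
    simp only [hπ, ContinuousLinearMap.comp_apply, Submodule.coe_subtypeL',
      Submodule.coe_subtype, Submodule.coe_continuous_linearProjOfClosedCompl']
    exact congrArg _ (Submodule.linearProjOfIsCompl_apply_left h₁ ⟨y, hy⟩)
  have hπ_right : ∀ y ∈ N, π y = 0 := by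
    intro y hy
    simp only [hπ, ContinuousLinearMap.comp_apply, Submodule.coe_subtypeL',
      Submodule.coe_subtype, Submodule.coe_continuous_linearProjOfClosedCompl']
    rw [Submodule.linearProjOfIsCompl_apply_right' h₁ hy]; rfl
  have hπ_mem : ∀ y : F, π y ∈ R := fun y => (R.linearProjOfClosedCompl N h₁ hT₀c hNc y).2
  -- deformation family
  set P : ℝ → (F →L[ℝ] F) := fun t =>
    ContinuousLinearMap.id ℝ F + t • (Q - ContinuousLinearMap.id ℝ F) with hP
  have hPapp : ∀ t y, P t y = y + t • (Q y - y) := by intro t y; simp [hP]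
  -- Q kills exactly N
  have hQzero_iff : ∀ y : F, Q y = 0 ↔ y ∈ N := by
    intro y
    constructor
    · intro h
      have hy : y ∈ Fstar ⊔ N := by rw [h₂.sup_eq_top]; trivial
      rcases Submodule.mem_sup.1 hy with ⟨f, hf, n, hn, rfl⟩
      have hQfn : Q (f + n) = f := by rw [map_add, hQfix f hf, hQker n hn, add_zero]
      rw [h] at hQfn
      simpa [← hQfn] using hn
    · exact hQker y
  have hQP : ∀ t y, Q (P t y) = Q y := by
    intro t y
    have hqq : Q (Q y) = Q y := hQfix _ (hQmem y)
    simp [hPapp, map_add, map_smul, map_sub, hqq]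
  have hsubN : ∀ t y, y - P t y ∈ N := by
    intro t y
    have h1 : y - Q y ∈ N := by
      rw [← hQzero_iff]
      have hqq : Q (Q y) = Q y := hQfix _ (hQmem y)
      simp [map_sub, hqq]
    have heq : y - P t y = (-t) • (Q y - y) := by
      rw [hPapp]; rw [neg_smul]; abel
    rw [heq]
    exact N.smul_mem (-t) (by simpa using N.neg_mem h1)
  have hπP : ∀ t y, π (P t y) = π y := by
    intro t y
    have h0 : π (y - P t y) = 0 := hπ_right _ (hsubN t y)
    rw [map_sub, sub_eq_zero] at h0
    exact h0.symm
  -- injectivity of P t on R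
  have hPinj : ∀ t, ∀ y ∈ R, P t y = 0 → y = 0 := by
    intro t y hy h0
    have hQy : Q y = 0 := by rw [← hQP t y, h0, map_zero]
    have hyN : y ∈ N := (hQzero_iff y).1 hQy
    exact (Submodule.disjoint_def.1 h₁.disjoint) y hy hyN
  -- the path
  set ω : ℝ → (E →L[ℝ] F) := fun t => (P t).comp T₀ with hω
  have hωapp : ∀ t x, ω t x = P t (T₀ x) := fun t x => rfl
  -- range of ω t
  have hrange : ∀ t, LinearMap.range (ω t : E →ₗ[ℝ] F) = R.map (P t : F →ₗ[ℝ] F) := by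
    intro t
    show LinearMap.range (((P t).comp T₀ : E →L[ℝ] F) : E →ₗ[ℝ] F) = R.map (P t : F →ₗ[ℝ] F)
    ext z
    simp only [LinearMap.mem_range, Submodule.mem_map, hR,
      ContinuousLinearMap.coe_comp', Function.comp_apply]
    constructor
    · rintro ⟨x, rfl⟩; exact ⟨T₀ x, ⟨x, rfl⟩, rfl⟩
    · rintro ⟨y, ⟨x, rfl⟩, rfl⟩; exact ⟨x, rfl⟩
  -- fixed point description of range
  have hrange_set : ∀ t, (R.map (P t : F →ₗ[ℝ] F) : Set F) = {z : F | P t (π z) = z} := by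
    intro t
    ext z
    constructor
    · rintro ⟨y, hy, rfl⟩
      have : π (P t y) = y := by rw [hπP t y]; exact hπ_left y hy
      simp only [Set.mem_setOf_eq, ContinuousLinearMap.coe_coe, this]
    · intro hz
      exact ⟨π z, hπ_mem z, hz⟩
  have hclosed : ∀ t, IsClosed ((R.map (P t : F →ₗ[ℝ] F)) : Set F) := by
    intro t
    rw [hrange_set t]
    have : {z : F | P t (π z) = z} = {z : F | P t (π z) - z = 0} := by
      ext z; simp [sub_eq_zero]
    rw [this]
    exact isClosed_eq (((P t).continuous.comp π.continuous).sub continuous_id) continuous_const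
  -- IsCompl
  have hcompl : ∀ t, IsCompl (R.map (P t : F →ₗ[ℝ] F)) N := by
    intro t
    constructor
    · rw [disjoint_iff_inf_le]
      rintro z ⟨hzM, hzN⟩
      rcases hzM with ⟨y, hy, rfl⟩
      have hy0 : y = 0 := by
        have : π (P t y) = y := by rw [hπP t y]; exact hπ_left y hy
        rw [hπ_right (P t y) hzN] at this
        exact this.symm
      simp [hy0]
    · rw [codisjoint_iff_le_sup]
      intro z _
      have hz : z ∈ R ⊔ N := by rw [h₁.sup_eq_top]; trivial
      rcases Submodule.mem_sup.1 hz with ⟨r, hr, n, hn, rfl⟩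
      have h1 : P t r ∈ R.map (P t : F →ₗ[ℝ] F) := ⟨r, hr, rfl⟩
      have h2 : (r - P t r) + n ∈ N := N.add_mem (hsubN t r) hn
      have : r + n = P t r + ((r - P t r) + n) := by abel
      rw [this]
      exact Submodule.add_mem_sup h1 h2
  -- kernel
  have hker : ∀ t, LinearMap.ker (ω t : E →ₗ[ℝ] F) = LinearMap.ker (T₀ : E →ₗ[ℝ] F) := by
    intro t
    ext x
    simp only [LinearMap.mem_ker, ContinuousLinearMap.coe_coe, hωapp]
    constructor
    · intro h0
      exact hPinj t (T₀ x) (LinearMap.mem_range_self _ x) h0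
    · intro h0; rw [h0, map_zero]
  -- membership in S
  have hmem : ∀ t, ω t ∈ {T : E →L[ℝ] F | IsClosed (LinearMap.range (T : E →ₗ[ℝ] F) : Set F) ∧
      IsCompl (LinearMap.range (T : E →ₗ[ℝ] F)) N ∧ LinearMap.ker (T : E →ₗ[ℝ] F) = LinearMap.ker (T₀ : E →ₗ[ℝ] F)} := by
    intro t
    refine ⟨?_, ?_, hker t⟩
    · rw [hrange t]; exact hclosed t
    · rw [hrange t]; exact hcompl t
  -- endpoints
  have hω0 : ω 0 = T₀ := by
    ext x; simp [hωapp, hPapp]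
  have hω1 : ω 1 = Q.comp T₀ := by
    ext x; simp [hωapp, hPapp]
  -- continuity
  have hcont : Continuous fun t : ℝ => ω t := by
    have : (fun t : ℝ => ω t) =
        fun t : ℝ => T₀ + t • ((Q - ContinuousLinearMap.id ℝ F).comp T₀) := by
      funext t
      ext x
      simp [hωapp, hPapp, ContinuousLinearMap.smul_apply]
    rw [this]
    exact continuous_const.add (continuous_id.smul continuous_const)
  refine ⟨⟨⟨fun s => ω s, hcont.comp continuous_subtype_val⟩, ?_, ?_⟩, fun s => hmem s⟩
  · simpa using hω0
  · simpa using hω1
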